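/- Let G be a finite group, and define the map F from Aut_c(G) to Hom(G, Z(G)) by F(φ)(g) = φ(g)·g⁻¹ for g ∈ G (this is indeed a homomorphism from G into Z(G) for every central automorphism φ). Then G is purely non-abelian if and only if F is a bijection. Moreover, in any case, if z ∈ Hom(G, Z(G)) lies in the image of F, then the unique central automorphism φ with F(φ) = z is given by φ(g) = g·z(g). -/

import Mathlib

/-- A finite group `G` is purely non-abelian if it has no nontrivial abelian direct
factor: whenever `G` is the internal direct product of two normal subgroups `A` and `B`
with `A` abelian, `A` is trivial. -/
def PurelyNonAbelian (G : Type*) [Group G] : Prop :=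
  ∀ A B : Subgroup G, A.Normal → B.Normal → IsCompl A B →
    (∀ a b : A, a * b = b * a) → A = ⊥

/-- The map `F : Aut_c(G) → Hom(G, Z(G))`, `F(φ)(g) = φ(g)·g⁻¹`.  This is indeed a
homomorphism from `G` into `Z(G)` for every central automorphism `φ`. -/
def Fmap {G : Type*} [Group G]
    (φ : {φ : MulAut G // ∀ g : G, φ g * g⁻¹ ∈ Subgroup.center G}) :
    {f : G →* G // ∀ x : G, f x ∈ Subgroup.center G} :=
  ⟨{ toFun := fun g => φ.1 g * g⁻¹
     map_one' := by simp
     map_mul' := by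
       intro g h
       have hc := φ.2 h
       rw [Subgroup.mem_center_iff] at hc
       show φ.1 (g * h) * (g * h)⁻¹ = (φ.1 g * g⁻¹) * (φ.1 h * h⁻¹)
       rw [map_mul, mul_inv_rev]
       calc φ.1 g * φ.1 h * (h⁻¹ * g⁻¹)
           = φ.1 g * ((φ.1 h * h⁻¹) * g⁻¹) := by group
         _ = φ.1 g * (g⁻¹ * (φ.1 h * h⁻¹)) := by rw [← hc g⁻¹]
         _ = φ.1 g * g⁻¹ * (φ.1 h * h⁻¹) := by group },
   fun x => φ.2 x⟩

/-- In a finite monoid, some positive power of every element is idempotent. -/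
lemma AY.exists_pow_idem {M : Type*} [Monoid M] [Finite M] (a : M) :
    ∃ n : ℕ, 0 < n ∧ a ^ n * a ^ n = a ^ n := by
  obtain ⟨i, j, hne, hij⟩ := Finite.exists_ne_map_eq_of_infinite (fun n : ℕ => a ^ n)
  wlog hlt : i < j generalizing i j
  · exact this j i hne.symm hij.symm (hne.lt_or_gt.resolve_left hlt)
  set d := j - i with hd
  have hd0 : 0 < d := Nat.sub_pos_of_lt hlt
  have hbase : a ^ (i + d) = a ^ i := by
    rw [hd, Nat.add_sub_cancel' hlt.le]; exact hij.symm
  have key : ∀ m, i ≤ m → a ^ (m + d) = a ^ m := by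
    intro m hm
    have : m = i + (m - i) := (Nat.add_sub_cancel' hm).symm
    rw [this, Nat.add_right_comm, pow_add, hbase, ← pow_add]
  have key2 : ∀ k m, i ≤ m → a ^ (m + k * d) = a ^ m := by
    intro k
    induction k with
    | zero => simp
    | succ k ih =>
      intro m hm
      have : m + (k + 1) * d = (m + k * d) + d := by ring
      rw [this, key _ (le_trans hm (Nat.le_add_right _ _)), ih m hm]
  refine ⟨(i + 1) * d, Nat.mul_pos (Nat.succ_pos i) hd0, ?_⟩
  rw [← pow_add]
  exact key2 (i + 1) ((i + 1) * d) (le_trans (Nat.lt_succ_self i).le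
    (Nat.le_mul_of_pos_right _ hd0))

/-- The "moreover" part: if `Fmap φ = z` then `φ g = g * z g`. -/
lemma AY.moreover {G : Type*} [Group G]
    (z : {f : G →* G // ∀ x : G, f x ∈ Subgroup.center G})
    (φ : {φ : MulAut G // ∀ g : G, φ g * g⁻¹ ∈ Subgroup.center G})
    (hφ : Fmap φ = z) (g : G) : φ.1 g = g * z.1 g := by
  have h1 : φ.1 g * g⁻¹ = z.1 g := by rw [← hφ]; rfl
  have h2 : φ.1 g = z.1 g * g := by rw [← h1]; group
  rw [h2, Subgroup.mem_center_iff.mp (z.2 g) g]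

/-- `Fmap` is always injective. -/
lemma AY.Fmap_injective {G : Type*} [Group G] :
    Function.Injective (Fmap (G := G)) := by
  intro φ₁ φ₂ h
  have h1 : ∀ g : G, φ₁.1 g * g⁻¹ = φ₂.1 g * g⁻¹ := fun g =>
    congrArg (fun w : {f : G →* G // ∀ x : G, f x ∈ Subgroup.center G} => w.1 g) h
  exact Subtype.ext (MulEquiv.ext fun g => mul_right_cancel (h1 g))

/-- If `G` is a finite purely non-abelian group, then `Fmap` is surjective. -/
lemma AY.Fmap_surjective {G : Type*} [Group G] [Finite G] (hpna : PurelyNonAbelian G) :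
    Function.Surjective (Fmap (G := G)) := by
  intro z
  -- the candidate endomorphism ψ(g) = g * z(g)
  set ψ : Monoid.End G :=
    { toFun := fun g => g * z.1 g
      map_one' := by simp
      map_mul' := by
        intro g h
        have hc := Subgroup.mem_center_iff.mp (z.2 g)
        show g * h * z.1 (g * h) = (g * z.1 g) * (h * z.1 h)
        rw [map_mul]
        calc g * h * (z.1 g * z.1 h) = g * (h * z.1 g) * z.1 h := by group
          _ = g * (z.1 g * h) * z.1 h := by rw [hc h]
          _ = (g * z.1 g) * (h * z.1 h) := by group } with hψ
  have hψ_app : ∀ g : G, ψ g = g * z.1 g := fun g => rfl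
  -- all iterates of ψ move points by central elements
  have hcent : ∀ (n : ℕ) (x : G), (ψ ^ n) x * x⁻¹ ∈ Subgroup.center G := by
    intro n
    induction n with
    | zero => intro x; simp [Subgroup.one_mem]
    | succ n ih =>
      intro x
      have hstep : (ψ ^ (n + 1)) x = (ψ ^ n) x * z.1 ((ψ ^ n) x) := by
        rw [pow_succ']
        exact hψ_app ((ψ ^ n) x)
      have : (ψ ^ (n + 1)) x * x⁻¹
          = z.1 ((ψ ^ n) x) * ((ψ ^ n) x * x⁻¹) := by
        rw [hstep, Subgroup.mem_center_iff.mp (z.2 ((ψ ^ n) x)) ((ψ ^ n) x)]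
        group
      rw [this]
      exact mul_mem (z.2 _) (ih x)
  have : Finite (Monoid.End G) :=
    Finite.of_injective (fun f => (f : G → G)) DFunLike.coe_injective
  obtain ⟨n, hn0, hidem⟩ := AY.exists_pow_idem ψ
  set e : Monoid.End G := ψ ^ n with he
  have hee : ∀ x : G, e (e x) = e x := by
    intro x
    have := congrArg (fun f : Monoid.End G => f x) hidem
    simpa using this
  have hecent : ∀ x : G, e x * x⁻¹ ∈ Subgroup.center G := fun x => hcent n x
  -- kernel of e is central
  have hker_center : ∀ x : G, x ∈ (e : G →* G).ker → x ∈ Subgroup.center G := by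
    intro x hx
    have hx : e x = 1 := hx
    have := hecent x
    rw [hx, one_mul] at this
    simpa using (Subgroup.center G).inv_mem this
  -- decomposition g = e g * k with k ∈ ker e
  have hdec : ∀ g : G, (e g)⁻¹ * g ∈ (e : G →* G).ker := by
    intro g
    show e ((e g)⁻¹ * g) = 1
    rw [map_mul, map_inv, hee, inv_mul_cancel]
  have hrange_normal : ((e : G →* G).range).Normal := by
    constructor
    intro b hb g
    obtain ⟨c, rfl⟩ := hb
    have hk := hker_center _ (hdec g)
    have hgeq : g = e g * ((e g)⁻¹ * g) := by group
    refine ⟨g * c * g⁻¹, ?_⟩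
    show e (g * c * g⁻¹) = g * e c * g⁻¹
    rw [map_mul, map_mul, map_inv]
    calc e g * e c * (e g)⁻¹
        = e g * (((e g)⁻¹ * g) * e c * ((e g)⁻¹ * g)⁻¹) * (e g)⁻¹ := by
          rw [← Subgroup.mem_center_iff.mp hk (e c)]; group
      _ = (e g * ((e g)⁻¹ * g)) * e c * (e g * ((e g)⁻¹ * g))⁻¹ := by group
      _ = g * e c * g⁻¹ := by rw [← hgeq]
  have hcompl : IsCompl ((e : G →* G).ker) ((e : G →* G).range) := by
    constructor
    · rw [disjoint_iff_inf_le]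
      rintro x ⟨hx1, hx2⟩
      obtain ⟨c, rfl⟩ := hx2
      have : e (e c) = 1 := hx1
      rw [hee] at this
      exact Subgroup.mem_bot.mpr this
    · rw [codisjoint_iff_le_sup]
      intro g _
      have h1 : (e g)⁻¹ * g ∈ (e : G →* G).ker := hdec g
      have h2 : e g ∈ (e : G →* G).range := ⟨g, rfl⟩
      have : g = e g * ((e g)⁻¹ * g) := by group
      rw [this, sup_comm]
      exact Subgroup.mul_mem_sup h2 h1
  have hab : ∀ a b : ((e : G →* G).ker), a * b = b * a := by
    intro a b
    apply Subtype.ext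
    exact Subgroup.mem_center_iff.mp (hker_center _ b.2) a.1
  have hker_bot : (e : G →* G).ker = ⊥ :=
    hpna _ _ (MonoidHom.normal_ker _) hrange_normal hcompl hab
  -- ψ is injective
  have hψinj : Function.Injective ψ := by
    refine (MonoidHom.ker_eq_bot_iff (MonoidHomClass.toMonoidHom ψ)).mp ?_
    rw [eq_bot_iff]
    intro x hx
    have hx : ψ x = 1 := hx
    have hxk : x ∈ (e : G →* G).ker := by
      show e x = 1
      obtain ⟨m, rfl⟩ := Nat.exists_eq_succ_of_ne_zero hn0.ne'
      show (ψ ^ (m + 1)) x = 1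
      rw [pow_succ]
      show (ψ ^ m) (ψ x) = 1
      rw [hx, map_one]
    rw [hker_bot] at hxk
    exact hxk
  have hψbij : Function.Bijective ψ := Finite.injective_iff_bijective.mp hψinj
  refine ⟨⟨MulEquiv.ofBijective (ψ : G →* G) hψbij, ?_⟩, ?_⟩
  · intro g
    show ψ g * g⁻¹ ∈ Subgroup.center G
    rw [hψ_app]
    have : g * z.1 g * g⁻¹ = z.1 g := by
      rw [Subgroup.mem_center_iff.mp (z.2 g) g]; group
    rw [this]
    exact z.2 g
  · apply Subtype.ext
    ext g
    show ψ g * g⁻¹ = z.1 g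
    rw [hψ_app]
    rw [Subgroup.mem_center_iff.mp (z.2 g) g]
    group

/-- Adney–Yen: `G` is purely non-abelian iff `F` is a bijection; moreover in any case,
if `z` is in the image of `F` then the unique central automorphism `φ` with `F φ = z`
is given by `φ(g) = g·z(g)`. -/
theorem purelyNonAbelian_iff_bijective_Fmap (G : Type*) [Group G] [Finite G] :
    (PurelyNonAbelian G ↔ Function.Bijective (Fmap (G := G))) ∧
    (∀ z : {f : G →* G // ∀ x : G, f x ∈ Subgroup.center G},
      z ∈ Set.range (Fmap (G := G)) →
      ∀ φ : {φ : MulAut G // ∀ g : G, φ g * g⁻¹ ∈ Subgroup.center G},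
        Fmap φ = z → ∀ g : G, φ.1 g = g * z.1 g) := by
  constructor
  · constructor
    · intro hpna
      exact ⟨AY.Fmap_injective, AY.Fmap_surjective hpna⟩
    · -- F bijective → purely non-abelian
      intro hbij A B hA hB hcompl habcomm
      -- elements of A commute with elements of B
      have hAB : ∀ a ∈ A, ∀ b ∈ B, Commute a b := fun a ha b hb =>
        Subgroup.commute_of_normal_of_disjoint A B hA hB hcompl.disjoint a b ha hb
      -- decomposition of any g as a * b
      have hdec : ∀ g : G, ∃ a ∈ A, ∃ b ∈ B, g = a * b := by
        intro g
        have hg : g ∈ (↑(A ⊔ B) : Set G) := by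
          rw [hcompl.sup_eq_top]; trivial
        rw [Subgroup.mul_normal A B] at hg
        obtain ⟨a, ha, b, hb, hab⟩ := hg
        exact ⟨a, ha, b, hb, hab.symm⟩
      -- A is central
      have hAcent : ∀ a ∈ A, a ∈ Subgroup.center G := by
        intro a ha
        rw [Subgroup.mem_center_iff]
        intro g
        obtain ⟨a', ha', b', hb', rfl⟩ := hdec g
        have h1 : a' * a = a * a' := by
          have := habcomm ⟨a', ha'⟩ ⟨a, ha⟩
          exact congrArg Subtype.val this
        have h2 : Commute a b' := hAB a ha b' hb'
        calc a' * b' * a = a' * (a * b') := by rw [mul_assoc, ← h2]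
          _ = a * (a' * b') := by rw [← mul_assoc, h1, mul_assoc]
      -- uniqueness of the A-component
      have huniq : ∀ a₁ ∈ A, ∀ b₁ ∈ B, ∀ a₂ ∈ A, ∀ b₂ ∈ B,
          a₁ * b₁ = a₂ * b₂ → a₁ = a₂ := by
        intro a₁ ha₁ b₁ hb₁ a₂ ha₂ b₂ hb₂ h
        have h3 : a₂⁻¹ * a₁ = b₂ * b₁⁻¹ := by
          rw [show a₂⁻¹ * a₁ = a₂⁻¹ * (a₁ * b₁) * b₁⁻¹ by group, h]
          group
        have hmem : a₂⁻¹ * a₁ ∈ A ⊓ B :=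
          ⟨mul_mem (A.inv_mem ha₂) ha₁, h3 ▸ mul_mem hb₂ (B.inv_mem hb₁)⟩
        rw [hcompl.disjoint.eq_bot] at hmem
        exact (inv_mul_eq_one.mp hmem).symm
      classical
      choose af haf bf hbf hg using hdec
      have hafm : ∀ g a b, a ∈ A → b ∈ B → g = a * b → af g = a := by
        intro g a b ha hb hgab
        exact huniq (af g) (haf g) (bf g) (hbf g) a ha b hb (by rw [← hg g, hgab])
      set zf : G →* G :=
        { toFun := fun g => (af g)⁻¹
          map_one' := by
            have : af 1 = 1 := hafm 1 1 1 A.one_mem B.one_mem (by simp)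
            simp [this]
          map_mul' := by
            intro g h
            have hcomm : af h * bf g = bf g * af h :=
              (hAB (af h) (haf h) (bf g) (hbf g)).eq
            have hprod : g * h = (af g * af h) * (bf g * bf h) := by
              have e1 : (af g * af h) * (bf g * bf h) = af g * (af h * bf g) * bf h := by
                group
              rw [e1, hcomm,
                show af g * (bf g * af h) * bf h = (af g * bf g) * (af h * bf h) by group,
                ← hg g, ← hg h]
            have hafgh : af (g * h) = af g * af h :=
              hafm (g * h) _ _ (mul_mem (haf g) (haf h))
                (mul_mem (hbf g) (hbf h)) hprod
            show (af (g * h))⁻¹ = (af g)⁻¹ * (af h)⁻¹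
            rw [hafgh, mul_inv_rev]
            exact Subgroup.mem_center_iff.mp
              ((Subgroup.center G).inv_mem (hAcent _ (haf g))) (af h)⁻¹ } with hzf
      have hzfc : ∀ x : G, zf x ∈ Subgroup.center G := fun x =>
        (Subgroup.center G).inv_mem (hAcent _ (haf x))
      obtain ⟨φ, hφ⟩ := hbij.2 ⟨zf, hzfc⟩
      have hform := AY.moreover ⟨zf, hzfc⟩ φ hφ
      rw [Subgroup.eq_bot_iff_forall]
      intro a ha
      have hafa : af a = a := hafm a a 1 ha B.one_mem (by simp)
      have h1 : φ.1 a = 1 := by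
        rw [hform a]
        show a * (af a)⁻¹ = 1
        rw [hafa, mul_inv_cancel]
      have h2 : φ.1 (1 : G) = 1 := map_one φ.1
      exact φ.1.injective (h1.trans h2.symm)
  · intro z _ φ hφ g
    exact AY.moreover z φ hφ g
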